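/- arXiv:1906.03811 — 2 statements merged into one kernel-verified Lean document; each statement's English description precedes it below -/
import Mathlib

section
/- The characteristic polynomial of the block matrix [[A - (g/ḡ)BC, (g/ḡ)BC], [-BC, A + BC]] equals p_a(s)·p_b(s), where p_a(s) = det(sI - A) and p_b(s) = det(sI - A + ((g - ḡ)/ḡ)BC). -/
open Matrix Polynomial

lemma charpoly_conj_aux {m : Type*} [DecidableEq m] [Fintype m]
    (N P Q : Matrix m m ℝ) (h1 : P * Q = 1) :
    (P * N * Q).charpoly = N.charpoly := by
  have hmap : ∀ (U V : Matrix m m ℝ),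
      (U * V).map (C : ℝ →+* ℝ[X]) = U.map C * V.map C := fun U V => by
    simpa using Matrix.map_mul (M := U) (N := V) (f := (C : ℝ →+* ℝ[X]))
  have key : charmatrix (P * N * Q) = P.map C * charmatrix N * Q.map C := by
    rw [charmatrix, charmatrix]
    simp only [RingHom.mapMatrix_apply]
    rw [Matrix.mul_sub, Matrix.sub_mul, hmap, hmap]
    congr 1
    calc (Matrix.scalar m) (X : ℝ[X]) = P.map C * Q.map C * (Matrix.scalar m) X := by
          rw [← hmap, h1]; simp
      _ = P.map C * (Matrix.scalar m) X * Q.map C := by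
          rw [Matrix.mul_assoc, Matrix.mul_assoc, scalar_commute]
          intro r; exact Commute.all _ _
  have hdet : (P.map (C : ℝ →+* ℝ[X])).det * (Q.map C).det = 1 := by
    rw [← det_mul, ← hmap, h1]; simp
  rw [Matrix.charpoly, key, det_mul, det_mul, Matrix.charpoly]
  ring_nf
  rw [mul_comm ((P.map C).det), mul_assoc, hdet, mul_one]

theorem block_charpoly_factorization {n : ℕ}
    (A : Matrix (Fin n) (Fin n) ℝ) (B : Matrix (Fin n) (Fin 1) ℝ)
    (C : Matrix (Fin 1) (Fin n) ℝ) (g gbar : ℝ) (hg : g ≠ 0) (hgbar : gbar ≠ 0) :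
    (Matrix.fromBlocks (A - (g / gbar) • (B * C)) ((g / gbar) • (B * C))
        (-(B * C)) (A + B * C)).charpoly
      = A.charpoly * (A - ((g - gbar) / gbar) • (B * C)).charpoly := by
  set D := B * C with hD
  set k : ℝ := g / gbar with hk
  set c : ℝ := (g - gbar) / gbar with hc
  set N : Matrix (Fin n ⊕ Fin n) (Fin n ⊕ Fin n) ℝ :=
    fromBlocks A (k • D) 0 (A - c • D) with hN
  set P : Matrix (Fin n ⊕ Fin n) (Fin n ⊕ Fin n) ℝ := fromBlocks 1 0 1 1 with hP
  set Q : Matrix (Fin n ⊕ Fin n) (Fin n ⊕ Fin n) ℝ := fromBlocks 1 0 (-1) 1 with hQ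
  have hck : c - k = -1 := by
    rw [hc, hk, ← sub_div, sub_sub_cancel_left, neg_div, div_self hgbar]
  have hPQ : P * Q = 1 := by
    rw [hP, hQ, fromBlocks_multiply]
    simp [← fromBlocks_one]
  have hM : P * N * Q = fromBlocks (A - k • D) (k • D) (-D) (A + D) := by
    rw [hP, hQ, hN, fromBlocks_multiply, fromBlocks_multiply]
    simp only [Matrix.one_mul, Matrix.zero_mul, Matrix.mul_one, Matrix.mul_neg,
      Matrix.mul_zero, add_zero, zero_add]
    have h1 : c • D - k • D = -D := by rw [← sub_smul, hck, neg_one_smul]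
    have h2 : k • D - c • D = D := by
      rw [← sub_smul, ← neg_sub c k, hck]; norm_num
    rw [fromBlocks_inj]
    refine ⟨by abel, rfl, ?_, ?_⟩
    · calc A + -(k • D + (A - c • D)) = c • D - k • D := by abel
        _ = -D := h1
    · calc k • D + (A - c • D) = A + (k • D - c • D) := by abel
        _ = A + D := by rw [h2]
  rw [← hM, charpoly_conj_aux _ _ _ hPQ, hN, charpoly_fromBlocks_zero₂₁]
end

section
/- For the singularly perturbed linear system τξ̇ = Aξ + BC(ζ - ξ)·(g/ḡ) + (boundary terms), if the fast subsystem matrix is Hurwitz and the slow subsystem is exponentially stable, then there exists τ* > 0 such that for all 0 < τ < τ*, the combined linear system ẋ = A₁₁x + A₁₂ξ, τξ̇ = A₂₁x + A₂₂ξ is exponentially stable, where A₂₂ is Hurwitz and A₁₁ - A₁₂A₂₂⁻¹A₂₁ is Hurwitz. -/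
open Matrix

def IsHurwitz {n : Type*} [Fintype n] [DecidableEq n] (M : Matrix n n ℝ) : Prop :=
  ∀ z ∈ spectrum ℂ (M.map (Complex.ofReal)), z.re < 0

namespace SingPertAux

attribute [local instance] Matrix.linftyOpNormedRing Matrix.linftyOpNormedAlgebra

variable {l : Type*} [Fintype l] [DecidableEq l]

noncomputable local instance : CompleteSpace (Matrix l l ℂ) :=
  FiniteDimensional.complete ℂ _

lemma norm_one_le : ‖(1 : Matrix l l ℂ)‖ ≤ 1 := by
  rcases isEmpty_or_nonempty l with h | h
  · simp [Subsingleton.elim (1 : Matrix l l ℂ) 0]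
  · exact le_of_eq norm_one

end SingPertAux

namespace SingPertAux2
open SingPertAux
attribute [local instance] Matrix.linftyOpNormedRing Matrix.linftyOpNormedAlgebra
variable {l : Type*} [Fintype l] [DecidableEq l]
noncomputable local instance : CompleteSpace (Matrix l l ℂ) :=
  FiniteDimensional.complete ℂ _

lemma inv_bound {t : Matrix l l ℂ} (u : (Matrix l l ℂ)ˣ) (hu : (u : Matrix l l ℂ) = 1 - t)
    (ht : ‖t‖ ≤ 1/2) : ‖((u⁻¹ : (Matrix l l ℂ)ˣ) : Matrix l l ℂ)‖ ≤ 2 := by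
  have h1 : ((u⁻¹ : (Matrix l l ℂ)ˣ) : Matrix l l ℂ) * (1 - t) = 1 := by
    rw [← hu]; exact u.inv_mul
  have h2 : ((u⁻¹ : (Matrix l l ℂ)ˣ) : Matrix l l ℂ)
      = 1 + ((u⁻¹ : (Matrix l l ℂ)ˣ) : Matrix l l ℂ) * t := by
    have h1' : ((u⁻¹ : (Matrix l l ℂ)ˣ) : Matrix l l ℂ)
        - ((u⁻¹ : (Matrix l l ℂ)ˣ) : Matrix l l ℂ) * t = 1 := by
      rw [← mul_one ((u⁻¹ : (Matrix l l ℂ)ˣ) : Matrix l l ℂ), mul_assoc, one_mul, ← mul_sub]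
      exact h1
    exact eq_add_of_sub_eq h1'
  have h3 : ‖((u⁻¹ : (Matrix l l ℂ)ˣ) : Matrix l l ℂ)‖
      ≤ 1 + ‖((u⁻¹ : (Matrix l l ℂ)ˣ) : Matrix l l ℂ)‖ * (1/2) := by
    calc ‖((u⁻¹ : (Matrix l l ℂ)ˣ) : Matrix l l ℂ)‖
        ≤ ‖(1 : Matrix l l ℂ)‖ + ‖((u⁻¹ : (Matrix l l ℂ)ˣ) : Matrix l l ℂ) * t‖ := by
          rw (occs := .pos [1]) [h2]; exact norm_add_le _ _
      _ ≤ 1 + ‖((u⁻¹ : (Matrix l l ℂ)ˣ) : Matrix l l ℂ)‖ * (1/2) :=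
          add_le_add norm_one_le (le_trans (norm_mul_le _ _)
            (mul_le_mul_of_nonneg_left ht (norm_nonneg _)))
  linarith

lemma eigen_norm_le {B : Matrix l l ℂ} {z : ℂ} (h : ¬ IsUnit (z • (1 : Matrix l l ℂ) - B)) :
    ‖z‖ ≤ ‖B‖ := by
  by_contra hlt
  push_neg at hlt
  have hz : z ≠ 0 := by
    intro h0; rw [h0] at hlt; simp at hlt; exact (norm_nonneg B).not_gt hlt
  have hfac : z • (1 : Matrix l l ℂ) - B = (z • (1 : Matrix l l ℂ)) * (1 - z⁻¹ • B) := by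
    rw [mul_sub, mul_one, smul_mul_assoc, one_mul, smul_smul, mul_inv_cancel₀ hz, one_smul]
  have hsmall : ‖z⁻¹ • B‖ < 1 := by
    rw [norm_smul, norm_inv]
    have hBz : (0:ℝ) < ‖z‖ := by simpa using hz
    rw [inv_mul_lt_one₀ hBz]
    simpa using hlt
  have hu1 : IsUnit (z • (1 : Matrix l l ℂ)) := by
    have : IsUnit (algebraMap ℂ (Matrix l l ℂ) z) := (IsUnit.map _ (Ne.isUnit hz))
    rwa [Algebra.algebraMap_eq_smul_one] at this
  have hu2 : IsUnit (1 - z⁻¹ • B) := ⟨Units.oneSub _ hsmall, rfl⟩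
  exact h (hfac ▸ hu1.mul hu2)

end SingPertAux2

namespace SingPertAux3
open SingPertAux SingPertAux2
attribute [local instance] Matrix.linftyOpNormedRing Matrix.linftyOpNormedAlgebra
variable {l : Type*} [Fintype l] [DecidableEq l]
noncomputable local instance : CompleteSpace (Matrix l l ℂ) :=
  FiniteDimensional.complete ℂ _

lemma resolvent_bound {A : Matrix l l ℂ} (hA : ∀ z ∈ spectrum ℂ A, z.re < 0) :
    ∃ K > (0:ℝ), ∀ μ : ℂ, 0 ≤ μ.re →
      IsUnit (μ • (1 : Matrix l l ℂ) - A) ∧ ‖Ring.inverse (μ • (1 : Matrix l l ℂ) - A)‖ ≤ K := by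
  -- invertibility everywhere on the closed right half plane
  have hinv : ∀ μ : ℂ, 0 ≤ μ.re → IsUnit (μ • (1 : Matrix l l ℂ) - A) := by
    intro μ hμ
    have hns : μ ∉ spectrum ℂ A := fun hmem => absurd (hA μ hmem) (not_lt.mpr hμ)
    rw [spectrum.notMem_iff, Algebra.algebraMap_eq_smul_one] at hns
    exact hns
  -- compact part
  set S : Set ℂ := {μ : ℂ | 0 ≤ μ.re} ∩ Metric.closedBall 0 (2 * ‖A‖ + 2) with hS
  have hScompact : IsCompact S :=
    (isCompact_closedBall 0 _).inter_left (isClosed_le continuous_const Complex.continuous_re)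
  have hcont : ContinuousOn (fun μ : ℂ => Ring.inverse (μ • (1 : Matrix l l ℂ) - A)) S := by
    intro μ hμ
    have hu := hinv μ hμ.1
    have hmap : Continuous (fun μ : ℂ => μ • (1 : Matrix l l ℂ) - A) :=
      (continuous_id.smul continuous_const).sub continuous_const
    have hca := NormedRing.inverse_continuousAt hu.unit
    rw [hu.unit_spec] at hca
    have hca2 : ContinuousAt (Ring.inverse ∘ fun ν : ℂ => ν • (1 : Matrix l l ℂ) - A) μ :=
      ContinuousAt.comp (g := Ring.inverse)
        (f := fun ν : ℂ => ν • (1 : Matrix l l ℂ) - A) hca hmap.continuousAt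
    exact hca2.continuousWithinAt
  obtain ⟨C, hC⟩ := hScompact.exists_bound_of_continuousOn hcont
  refine ⟨max C 2, lt_of_lt_of_le (by norm_num) (le_max_right _ _), fun μ hμ => ?_⟩
  refine ⟨hinv μ hμ, ?_⟩
  by_cases hball : μ ∈ Metric.closedBall (0:ℂ) (2 * ‖A‖ + 2)
  · exact le_trans (hC μ ⟨hμ, hball⟩) (le_max_left _ _)
  · -- large μ
    have hμnorm : 2 * ‖A‖ + 2 < ‖μ‖ := by
      simpa [Complex.dist_eq] using hball
    have hz : μ ≠ 0 := by
      intro h0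
      rw [h0] at hμnorm; simp at hμnorm
      nlinarith [norm_nonneg A]
    have hsmall : ‖μ⁻¹ • A‖ ≤ 1/2 := by
      rw [norm_smul, norm_inv]
      rw [inv_mul_le_iff₀ (norm_pos_iff.mpr hz)]
      nlinarith [norm_nonneg A]
    have hfac : μ • (1 : Matrix l l ℂ) - A = (μ • (1 : Matrix l l ℂ)) * (1 - μ⁻¹ • A) := by
      rw [mul_sub, mul_one, smul_mul_assoc, one_mul, smul_smul, mul_inv_cancel₀ hz, one_smul]
    have hmul1 : (μ • (1 : Matrix l l ℂ)) * (μ⁻¹ • (1 : Matrix l l ℂ)) = 1 := by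
      rw [smul_mul_assoc, one_mul, smul_smul, mul_inv_cancel₀ hz, one_smul]
    have hmul2 : (μ⁻¹ • (1 : Matrix l l ℂ)) * (μ • (1 : Matrix l l ℂ)) = 1 := by
      rw [smul_mul_assoc, one_mul, smul_smul, inv_mul_cancel₀ hz, one_smul]
    set u1 : (Matrix l l ℂ)ˣ := ⟨μ • (1 : Matrix l l ℂ), μ⁻¹ • (1 : Matrix l l ℂ), hmul1, hmul2⟩
      with hu1def
    have hsmall' : ‖μ⁻¹ • A‖ < 1 := lt_of_le_of_lt hsmall (by norm_num)
    set u2 : (Matrix l l ℂ)ˣ := Units.oneSub _ hsmall' with hu2def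
    set u : (Matrix l l ℂ)ˣ := u1 * u2 with hudef
    have huval : (u : Matrix l l ℂ) = μ • (1 : Matrix l l ℂ) - A := by
      have hval2 : (u2 : Matrix l l ℂ) = 1 - μ⁻¹ • A := rfl
      rw [hfac, hudef, Units.val_mul, hval2]
    have hRinv : Ring.inverse (μ • (1 : Matrix l l ℂ) - A) = ((u⁻¹ : (Matrix l l ℂ)ˣ) : _) := by
      rw [← huval, Ring.inverse_unit]
    rw [hRinv]
    have hinvu : ((u⁻¹ : (Matrix l l ℂ)ˣ) : Matrix l l ℂ)
        = ((u2⁻¹ : (Matrix l l ℂ)ˣ) : Matrix l l ℂ) * ((u1⁻¹ : (Matrix l l ℂ)ˣ) : _) := by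
      rw [hudef, _root_.mul_inv_rev, Units.val_mul]
    have hb2 : ‖((u2⁻¹ : (Matrix l l ℂ)ˣ) : Matrix l l ℂ)‖ ≤ 2 := inv_bound u2 rfl hsmall
    have hb1 : ‖((u1⁻¹ : (Matrix l l ℂ)ˣ) : Matrix l l ℂ)‖ ≤ ‖μ‖⁻¹ := by
      have hval : ((u1⁻¹ : (Matrix l l ℂ)ˣ) : Matrix l l ℂ) = μ⁻¹ • (1 : Matrix l l ℂ) := rfl
      rw [hval, norm_smul, norm_inv]
      have h0 : (0:ℝ) ≤ ‖μ‖⁻¹ := by positivity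
      calc ‖μ‖⁻¹ * ‖(1 : Matrix l l ℂ)‖ ≤ ‖μ‖⁻¹ * 1 := by
            exact mul_le_mul_of_nonneg_left norm_one_le h0
        _ = ‖μ‖⁻¹ := mul_one _
    calc ‖((u⁻¹ : (Matrix l l ℂ)ˣ) : Matrix l l ℂ)‖
        ≤ ‖((u2⁻¹ : (Matrix l l ℂ)ˣ) : Matrix l l ℂ)‖
          * ‖((u1⁻¹ : (Matrix l l ℂ)ˣ) : Matrix l l ℂ)‖ := by
          rw [hinvu]; exact norm_mul_le _ _
      _ ≤ 2 * 1 := by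
          refine mul_le_mul hb2 (le_trans hb1 ?_) (norm_nonneg _) (by norm_num)
          rw [inv_le_one_iff₀]
          right; nlinarith [norm_nonneg A]
      _ ≤ max C 2 := by simp
end SingPertAux3

section Main
open SingPertAux SingPertAux2 SingPertAux3
attribute [local instance] Matrix.linftyOpNormedAddCommGroup Matrix.linftyOpNormedRing
  Matrix.linftyOpNormedAlgebra

noncomputable local instance (l : Type*) [Fintype l] [DecidableEq l] :
    CompleteSpace (Matrix l l ℂ) := FiniteDimensional.complete ℂ _

set_option maxHeartbeats 1000000 in
theorem singular_perturbation_stability {n m : ℕ}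
    (A11 : Matrix (Fin n) (Fin n) ℝ) (A12 : Matrix (Fin n) (Fin m) ℝ)
    (A21 : Matrix (Fin m) (Fin n) ℝ) (A22 : Matrix (Fin m) (Fin m) ℝ)
    (h22 : IsHurwitz A22) (h0 : IsHurwitz (A11 - A12 * A22⁻¹ * A21)) :
    ∃ τstar > (0 : ℝ), ∀ τ : ℝ, 0 < τ → τ < τstar →
      IsHurwitz (Matrix.fromBlocks A11 A12 (τ⁻¹ • A21) (τ⁻¹ • A22)) := by
  classical
  set B11 := A11.map Complex.ofReal with hB11
  set B12 := A12.map Complex.ofReal with hB12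
  set B21 := A21.map Complex.ofReal with hB21
  set B22 := A22.map Complex.ofReal with hB22
  -- A22 is invertible over ℝ
  have hB22unit : IsUnit B22 := by
    have h0nm : (0:ℂ) ∉ spectrum ℂ B22 := fun hmem => absurd (h22 0 hmem) (by norm_num)
    exact (spectrum.zero_notMem_iff ℂ).mp h0nm
  have hdetA22 : IsUnit A22.det := by
    have h1 : IsUnit B22.det := (Matrix.isUnit_iff_isUnit_det B22).mp hB22unit
    have h2 : B22.det = Complex.ofReal A22.det := by
      rw [hB22]
      exact (RingHom.map_det Complex.ofRealHom A22).symm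
    rw [h2] at h1
    have : (A22.det : ℂ) ≠ 0 := h1.ne_zero
    exact isUnit_iff_ne_zero.mpr (fun hh => this (by rw [hh]; simp))
  set N := (A22⁻¹).map Complex.ofReal with hN
  have hmapmul : ∀ {a b c : ℕ} (P : Matrix (Fin a) (Fin b) ℝ) (Q : Matrix (Fin b) (Fin c) ℝ),
      (P * Q).map Complex.ofReal = P.map Complex.ofReal * Q.map Complex.ofReal := by
    intro a b c P Q
    ext i j
    simp [Matrix.map_apply, Matrix.mul_apply]
  have hBN : B22 * N = 1 := by
    rw [hB22, hN, ← hmapmul, Matrix.mul_nonsing_inv A22 hdetA22]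
    ext i j
    simp [Matrix.map_apply, Matrix.one_apply]; split <;> simp
  have hNB : N * B22 = 1 := by
    rw [hB22, hN, ← hmapmul, Matrix.nonsing_inv_mul A22 hdetA22]
    ext i j
    simp [Matrix.map_apply, Matrix.one_apply]; split <;> simp
  set A0c := (A11 - A12 * A22⁻¹ * A21).map Complex.ofReal with hA0c
  have hA0c' : A0c = B11 - B12 * N * B21 := by
    rw [hA0c, Matrix.map_sub _ (fun _ _ => Complex.ofReal_sub _ _), hmapmul, hmapmul]
  -- resolvent bounds
  obtain ⟨K2, hK2pos, hK2⟩ := resolvent_bound (A := B22) h22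
  obtain ⟨K0, hK0pos, hK0⟩ := resolvent_bound (A := A0c) h0
  set Cb : ℝ := K2 * (‖B12‖ * ‖N * B21‖ + 1) with hCb
  have hCbpos : 0 < Cb := by positivity
  set a0 : ℝ := ‖A0c‖ with ha0
  set Dd : ℝ := K0 * (2 * a0 * Cb) with hDd
  have hDd0 : 0 ≤ Dd := by positivity
  refine ⟨min (1/(2*Cb)) (1/(Dd+1)), lt_min (by positivity) (by positivity), ?_⟩
  intro τ hτpos hτlt
  have hτCb : τ * Cb ≤ 1/2 := by
    have h1 : τ < 1/(2*Cb) := lt_of_lt_of_le hτlt (min_le_left _ _)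
    rw [lt_div_iff₀ (by positivity)] at h1
    nlinarith
  have hτDd : τ * Dd < 1 := by
    have h1 : τ < 1/(Dd+1) := lt_of_lt_of_le hτlt (min_le_right _ _)
    rw [lt_div_iff₀ (by positivity)] at h1
    nlinarith
  intro z hz
  by_contra hre
  push_neg at hre
  have hτC : (τ:ℂ) ≠ 0 := by exact_mod_cast hτpos.ne'
  set μ : ℂ := (τ:ℂ) * z with hμ
  have hμre : 0 ≤ μ.re := by
    rw [hμ]
    simp [Complex.mul_re]
    positivity
  -- the matrix in block form
  have hzmem := (spectrum.mem_iff).mp hz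
  rw [Algebra.algebraMap_eq_smul_one] at hzmem
  apply hzmem
  have hMc : (Matrix.fromBlocks A11 A12 (τ⁻¹ • A21) (τ⁻¹ • A22)).map Complex.ofReal
      = Matrix.fromBlocks B11 B12 ((τ:ℂ)⁻¹ • B21) ((τ:ℂ)⁻¹ • B22) := by
    have hs1 : (τ⁻¹ • A21).map Complex.ofReal = (τ:ℂ)⁻¹ • B21 := by
      ext i j
      simp [Matrix.map_apply, Matrix.smul_apply, Complex.ofReal_mul, Complex.ofReal_inv,
        smul_eq_mul, hB21]
    have hs2 : (τ⁻¹ • A22).map Complex.ofReal = (τ:ℂ)⁻¹ • B22 := by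
      ext i j
      simp [Matrix.map_apply, Matrix.smul_apply, Complex.ofReal_mul, Complex.ofReal_inv,
        smul_eq_mul, hB22]
    rw [Matrix.fromBlocks_map, hs1, hs2]
  rw [hMc]
  have hblocksub : z • (1 : Matrix (Fin n ⊕ Fin m) (Fin n ⊕ Fin m) ℂ)
      - Matrix.fromBlocks B11 B12 ((τ:ℂ)⁻¹ • B21) ((τ:ℂ)⁻¹ • B22)
      = Matrix.fromBlocks (z • 1 - B11) (-B12) (-((τ:ℂ)⁻¹ • B21))
          (z • 1 - (τ:ℂ)⁻¹ • B22) := by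
    rw [← Matrix.fromBlocks_one, Matrix.fromBlocks_smul, sub_eq_add_neg,
      Matrix.fromBlocks_neg, Matrix.fromBlocks_add]
    congr 1 <;> simp [sub_eq_add_neg]
  rw [hblocksub]
  -- D block is invertible with explicit inverse τ • W
  have hVunit : IsUnit (μ • (1 : Matrix (Fin m) (Fin m) ℂ) - B22) := (hK2 μ hμre).1
  set W := Ring.inverse (μ • (1 : Matrix (Fin m) (Fin m) ℂ) - B22) with hW
  have hWnorm : ‖W‖ ≤ K2 := (hK2 μ hμre).2
  have hDblock : z • (1 : Matrix (Fin m) (Fin m) ℂ) - (τ:ℂ)⁻¹ • B22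
      = (τ:ℂ)⁻¹ • (μ • (1 : Matrix (Fin m) (Fin m) ℂ) - B22) := by
    rw [smul_sub, smul_smul, hμ, ← mul_assoc, inv_mul_cancel₀ hτC, one_mul]
  have hWV : W * (μ • (1 : Matrix (Fin m) (Fin m) ℂ) - B22) = 1 :=
    Ring.inverse_mul_cancel _ hVunit
  have hVW : (μ • (1 : Matrix (Fin m) (Fin m) ℂ) - B22) * W = 1 :=
    Ring.mul_inverse_cancel _ hVunit
  have hiD1 : ((τ:ℂ) • W) * (z • (1 : Matrix (Fin m) (Fin m) ℂ) - (τ:ℂ)⁻¹ • B22) = 1 := by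
    rw [hDblock, smul_mul_assoc, mul_smul_comm, smul_smul, mul_inv_cancel₀ hτC, one_smul, hWV]
  have hiD2 : (z • (1 : Matrix (Fin m) (Fin m) ℂ) - (τ:ℂ)⁻¹ • B22) * ((τ:ℂ) • W) = 1 := by
    rw [hDblock, smul_mul_assoc, mul_smul_comm, smul_smul, inv_mul_cancel₀ hτC, one_smul, hVW]
  letI iD : Invertible (z • (1 : Matrix (Fin m) (Fin m) ℂ) - (τ:ℂ)⁻¹ • B22) :=
    ⟨(τ:ℂ) • W, hiD1, hiD2⟩
  rw [Matrix.isUnit_fromBlocks_iff_of_invertible₂₂]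
  have hinvD : ⅟(z • (1 : Matrix (Fin m) (Fin m) ℂ) - (τ:ℂ)⁻¹ • B22) = (τ:ℂ) • W := rfl
  rw [hinvD]
  -- compute the Schur complement
  have hSchur : (z • (1 : Matrix (Fin n) (Fin n) ℂ) - B11)
      - (-B12) * ((τ:ℂ) • W) * (-((τ:ℂ)⁻¹ • B21))
      = z • (1 : Matrix (Fin n) (Fin n) ℂ) - B11 - B12 * W * B21 := by
    have : (-B12) * ((τ:ℂ) • W) * (-((τ:ℂ)⁻¹ • B21)) = B12 * W * B21 := by
      simp only [Matrix.neg_mul, Matrix.mul_neg, neg_neg]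
      rw [Matrix.mul_smul, Matrix.mul_smul, Matrix.smul_mul, smul_smul, inv_mul_cancel₀ hτC, one_smul]
    rw [this]
  rw [hSchur]
  -- resolvent identity
  have hkey : W + N = μ • (W * N) := by
    have e1 : W * (B22 * N) + (W * (μ • (1 : Matrix (Fin m) (Fin m) ℂ) - B22)) * N
        = W + N := by rw [hBN, hWV, mul_one, one_mul]
    rw [← e1, mul_sub, sub_mul, Matrix.mul_smul, mul_one, Matrix.smul_mul, ← mul_assoc]
    abel
  set T := μ • (B12 * (W * N) * B21) with hT
  have e2 : B12 * W * B21 + B12 * N * B21 = T := by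
    rw [hT, ← Matrix.add_mul, ← Matrix.mul_add, hkey, Matrix.mul_smul, Matrix.smul_mul]
  have hGid : z • (1 : Matrix (Fin n) (Fin n) ℂ) - B11 - B12 * W * B21
      = z • (1 : Matrix (Fin n) (Fin n) ℂ) - A0c - T := by
    rw [hA0c', ← e2]; abel
  rw [hGid]
  -- (i) bound the eigenvalue
  have hnotG : ¬ IsUnit (z • (1 : Matrix (Fin n) (Fin n) ℂ) - A0c - T) := by
    intro hU
    apply hzmem
    rw [hMc, hblocksub, Matrix.isUnit_fromBlocks_iff_of_invertible₂₂, hinvD, hSchur, hGid]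
    exact hU
  have hznorm : ‖z‖ ≤ 2 * a0 := by
    have h1 : ¬ IsUnit (z • (1 : Matrix (Fin n) (Fin n) ℂ) - (A0c + T)) := by
      rw [← sub_sub]; exact hnotG
    have h2 : ‖z‖ ≤ ‖A0c + T‖ := eigen_norm_le h1
    have h3 : ‖A0c + T‖ ≤ a0 + ‖T‖ := by rw [ha0]; exact norm_add_le _ _
    have hμnorm : ‖μ‖ = τ * ‖z‖ := by
      rw [hμ, norm_mul, Complex.norm_real, Real.norm_eq_abs, abs_of_pos hτpos]
    have hF : ‖B12 * (W * N) * B21‖ ≤ Cb := by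
      have hassoc : B12 * (W * N) * B21 = B12 * (W * (N * B21)) := by
        rw [Matrix.mul_assoc, Matrix.mul_assoc]
      rw [hassoc]
      calc ‖B12 * (W * (N * B21))‖ ≤ ‖B12‖ * ‖W * (N * B21)‖ := Matrix.linfty_opNorm_mul _ _
        _ ≤ ‖B12‖ * (‖W‖ * ‖N * B21‖) := by
            exact mul_le_mul_of_nonneg_left (Matrix.linfty_opNorm_mul _ _) (norm_nonneg _)
        _ ≤ Cb := by
            rw [hCb]
            nlinarith [norm_nonneg B12, norm_nonneg (N * B21), norm_nonneg W, hWnorm, hK2pos]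
    have hTnorm : ‖T‖ ≤ τ * ‖z‖ * Cb := by
      rw [hT, norm_smul, hμnorm]
      exact mul_le_mul_of_nonneg_left hF (by positivity)
    nlinarith [norm_nonneg z, norm_nonneg T]
  -- (ii) perturbation argument
  obtain ⟨hR0unit, hR0norm⟩ := hK0 z hre
  set R0 := Ring.inverse (z • (1 : Matrix (Fin n) (Fin n) ℂ) - A0c) with hR0
  have hTnorm2 : ‖T‖ ≤ τ * (2 * a0) * Cb := by
    have hμnorm : ‖μ‖ = τ * ‖z‖ := by
      rw [hμ, norm_mul, Complex.norm_real, Real.norm_eq_abs, abs_of_pos hτpos]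
    have hF : ‖B12 * (W * N) * B21‖ ≤ Cb := by
      have hassoc : B12 * (W * N) * B21 = B12 * (W * (N * B21)) := by
        rw [Matrix.mul_assoc, Matrix.mul_assoc]
      rw [hassoc]
      calc ‖B12 * (W * (N * B21))‖ ≤ ‖B12‖ * ‖W * (N * B21)‖ := Matrix.linfty_opNorm_mul _ _
        _ ≤ ‖B12‖ * (‖W‖ * ‖N * B21‖) := by
            exact mul_le_mul_of_nonneg_left (Matrix.linfty_opNorm_mul _ _) (norm_nonneg _)
        _ ≤ Cb := by
            rw [hCb]
            nlinarith [norm_nonneg B12, norm_nonneg (N * B21), norm_nonneg W, hWnorm, hK2pos]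
    calc ‖T‖ = ‖μ‖ * ‖B12 * (W * N) * B21‖ := by rw [hT, norm_smul]
      _ = τ * ‖z‖ * ‖B12 * (W * N) * B21‖ := by rw [hμnorm]
      _ ≤ τ * (2 * a0) * ‖B12 * (W * N) * B21‖ :=
          mul_le_mul_of_nonneg_right (mul_le_mul_of_nonneg_left hznorm hτpos.le)
            (norm_nonneg _)
      _ ≤ τ * (2 * a0) * Cb := by
          have h0 : (0:ℝ) ≤ τ * (2 * a0) := by positivity
          exact mul_le_mul_of_nonneg_left hF h0
  have hsmallT : ‖R0 * T‖ < 1 := by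
    calc ‖R0 * T‖ ≤ ‖R0‖ * ‖T‖ := norm_mul_le _ _
      _ ≤ K0 * (τ * (2 * a0) * Cb) := by
          exact mul_le_mul hR0norm hTnorm2 (norm_nonneg _) (le_of_lt hK0pos)
      _ = τ * Dd := by rw [hDd]; ring
      _ < 1 := hτDd
  have hfac2 : z • (1 : Matrix (Fin n) (Fin n) ℂ) - A0c - T
      = (z • (1 : Matrix (Fin n) (Fin n) ℂ) - A0c) * (1 - R0 * T) := by
    rw [mul_sub, mul_one, ← mul_assoc, Ring.mul_inverse_cancel _ hR0unit, one_mul]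
  rw [hfac2]
  exact hR0unit.mul ⟨Units.oneSub _ hsmallT, rfl⟩

end Main
end
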